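/- Under the FISTA setup, the iterate sequence (x_k) is bounded. Moreover, if F(x_k) → μ := min F, then every weak cluster point of (x_k) lies in S := argmin F. -/

import Mathlib

open Filter
open scoped RealInnerProductSpace

set_option linter.unusedSectionVars false
set_option maxHeartbeats 1000000

section Aux

lemma aux_1d (φ φd : ℝ → ℝ) (L : ℝ)
    (hderiv : ∀ s : ℝ, HasDerivAt φ (φd s) s)
    (hbd : ∀ s ∈ Set.Icc (0:ℝ) 1, φd s ≤ φd 0 + L * s) :
    φ 1 ≤ φ 0 + φd 0 + L / 2 := by
  set ψ : ℝ → ℝ := fun s => φ 0 + s * φd 0 + L * s ^ 2 / 2 - φ s with hψ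
  have hψd : ∀ s : ℝ, HasDerivAt ψ (φd 0 + L * s - φd s) s := by
    intro s
    have h1 : HasDerivAt (fun s : ℝ => φ 0 + s * φd 0 + L * s ^ 2 / 2)
        (φd 0 + L * s) s := by
      have := (((hasDerivAt_id s).mul_const (φd 0)).const_add (φ 0)).add
        (((hasDerivAt_pow 2 s).const_mul L).div_const 2)
      exact this.congr_deriv (by simp; ring)
    exact h1.sub (hderiv s)
  have hmono : MonotoneOn ψ (Set.Icc (0:ℝ) 1) := by
    apply monotoneOn_of_deriv_nonneg (convex_Icc 0 1)
    · exact fun s _ => ((hψd s).differentiableAt.continuousAt).continuousWithinAt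
    · exact fun s _ => (hψd s).differentiableAt.differentiableWithinAt
    · intro s hs
      rw [interior_Icc] at hs
      rw [(hψd s).deriv]
      have := hbd s ⟨hs.1.le, hs.2.le⟩
      linarith
  have := hmono (Set.mem_Icc.2 ⟨le_refl 0, zero_le_one⟩) (Set.mem_Icc.2 ⟨zero_le_one, le_refl 1⟩) zero_le_one
  simp only [hψ] at this
  nlinarith [this]

variable {X : Type*} [NormedAddCommGroup X] [InnerProductSpace ℝ X] [CompleteSpace X]

lemma aux_descent (β : ℝ) (hβ : 0 < β) (f : X → ℝ) (f' : X → X)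
    (hf' : ∀ x, HasGradientAt f (f' x) x)
    (hlip : LipschitzWith (Real.toNNReal β) f') (u v : X) :
    f (u + v) ≤ f u + ⟪f' u, v⟫ + β / 2 * ‖v‖ ^ 2 := by
  set φ : ℝ → ℝ := fun s => f (u + s • v) with hφ
  set φd : ℝ → ℝ := fun s => ⟪f' (u + s • v), v⟫ with hφd
  have hderiv : ∀ s : ℝ, HasDerivAt φ (φd s) s := by
    intro s
    have hc : HasDerivAt (fun s : ℝ => u + s • v) v s := by
      simpa using ((hasDerivAt_id s).smul_const v).const_add u
    have hF : HasFDerivAt f (InnerProductSpace.toDual ℝ X (f' (u + s • v))) (u + s • v) :=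
      hf' (u + s • v)
    have := hF.comp_hasDerivAt s hc
    simpa [hφ, hφd, InnerProductSpace.toDual_apply_apply, Function.comp_def] using this
  have hbd : ∀ s ∈ Set.Icc (0:ℝ) 1, φd s ≤ φd 0 + (β * ‖v‖ ^ 2) * s := by
    intro s hs
    have h1 : φd s - φd 0 = ⟪f' (u + s • v) - f' u, v⟫ := by
      simp [hφd, inner_sub_left]
    have h2 : ⟪f' (u + s • v) - f' u, v⟫ ≤ ‖f' (u + s • v) - f' u‖ * ‖v‖ :=
      real_inner_le_norm _ _
    have he : (u + s • v) - u = s • v := by abel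
    have h3 : ‖f' (u + s • v) - f' u‖ ≤ β * (s * ‖v‖) :=
      calc ‖f' (u + s • v) - f' u‖ ≤ (Real.toNNReal β : ℝ) * dist (u + s • v) u := by
            simpa [dist_eq_norm] using hlip.dist_le_mul (u + s • v) u
        _ = β * ‖s • v‖ := by
            rw [Real.coe_toNNReal β hβ.le, dist_eq_norm, he]
        _ ≤ β * (s * ‖v‖) := by
            rw [norm_smul, Real.norm_eq_abs, abs_of_nonneg hs.1]
    nlinarith [norm_nonneg v, h2, h3, mul_le_mul_of_nonneg_right h3 (norm_nonneg v)]
  have h := aux_1d φ φd (β * ‖v‖ ^ 2) hderiv hbd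
  simp only [hφ, hφd, one_smul, zero_smul, add_zero] at h
  linarith

lemma aux_gradineq (f : X → ℝ) (hf : ConvexOn ℝ Set.univ f) (f' : X → X)
    (hf' : ∀ x, HasGradientAt f (f' x) x) (u w : X) :
    f u + ⟪f' u, w - u⟫ ≤ f w := by
  set d := w - u with hd
  set φ : ℝ → ℝ := fun s => f (u + s • d) with hφ
  have hconv : ConvexOn ℝ Set.univ φ := by
    refine ⟨convex_univ, ?_⟩
    intro s₁ _ s₂ _ a b ha hb hab
    have key : u + (a • s₁ + b • s₂) • d = a • (u + s₁ • d) + b • (u + s₂ • d) := by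
      have h2 : a • (u + s₁ • d) + b • (u + s₂ • d)
          = (a + b) • u + (a • s₁ + b • s₂) • d := by
        simp only [smul_eq_mul]; module
      rw [h2, hab, one_smul]
    have h3 := hf.2 (Set.mem_univ (u + s₁ • d)) (Set.mem_univ (u + s₂ • d)) ha hb hab
    simp only [smul_eq_mul] at h3 ⊢
    simp only [hφ]
    rw [show a * s₁ + b * s₂ = a • s₁ + b • s₂ from by simp [smul_eq_mul], key]
    exact h3
  have hder : HasDerivAt φ ⟪f' u, d⟫ 0 := by
    have hc : HasDerivAt (fun s : ℝ => u + s • d) d 0 := by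
      simpa using ((hasDerivAt_id (0:ℝ)).smul_const d).const_add u
    have hF : HasFDerivAt f (InnerProductSpace.toDual ℝ X (f' (u + (0:ℝ) • d))) (u + (0:ℝ) • d) :=
      hf' _
    have := hF.comp_hasDerivAt 0 hc
    simpa [hφ, InnerProductSpace.toDual_apply_apply, Function.comp_def] using this
  have hslope := hconv.deriv_le_slope (Set.mem_univ (0:ℝ)) (Set.mem_univ (1:ℝ))
    zero_lt_one hder.differentiableAt
  rw [hder.deriv] at hslope
  have h01 : φ 1 = f w := by simp [hφ, hd]
  have h00 : φ 0 = f u := by simp [hφ]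
  rw [show slope φ 0 1 = f w - f u from by rw [slope_def_field, h01, h00]; ring] at hslope
  linarith

/-- convex combination norm identity -/
lemma aux_normid (a b : ℝ) (ha : 0 ≤ a) (hb : 0 ≤ b) (hab : a + b = 1) (w z : X) :
    ‖a • w + b • z‖ ^ 2 = a * ‖w‖ ^ 2 + b * ‖z‖ ^ 2 - a * b * ‖w - z‖ ^ 2 := by
  have h1 : ‖a • w + b • z‖ ^ 2 = a ^ 2 * ‖w‖ ^ 2 + 2 * (a * b) * ⟪w, z⟫ + b ^ 2 * ‖z‖ ^ 2 := by
    rw [@norm_add_sq_real, real_inner_smul_left, real_inner_smul_right,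
      norm_smul, norm_smul, Real.norm_eq_abs, Real.norm_eq_abs, abs_of_nonneg ha, abs_of_nonneg hb]
    ring
  have h2 : ‖w - z‖ ^ 2 = ‖w‖ ^ 2 - 2 * ⟪w, z⟫ + ‖z‖ ^ 2 := by
    rw [@norm_sub_sq_real]
  have hb' : b = 1 - a := by linarith
  subst hb'
  rw [h1, h2]; ring

lemma aux_ereal_mul_add (a c : ℝ) (ha : 0 ≤ a) (d : EReal) (hd : d ≠ ⊥) :
    (a : EReal) * ((c : EReal) + d) = (a : EReal) * c + (a : EReal) * d := by
  induction d with
  | bot => exact absurd rfl hd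
  | coe r =>
      rw [← EReal.coe_add, ← EReal.coe_mul, ← EReal.coe_mul, ← EReal.coe_mul, ← EReal.coe_add]
      norm_cast; ring
  | top =>
      rcases eq_or_lt_of_le ha with h0 | hpos
      · simp [← h0]
      · have h1 : (c : EReal) + ⊤ = ⊤ := by
          rw [add_comm]; exact EReal.top_add_of_ne_bot (EReal.coe_ne_bot c)
        have h2 : (a : EReal) * ⊤ = ⊤ := EReal.mul_top_of_pos (by exact_mod_cast hpos)
        rw [h1, h2, add_comm]
        exact (EReal.top_add_of_ne_bot (by exact EReal.coe_ne_bot _)).symm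

end Aux

/-- `w` is a weak cluster point of the sequence `x`. -/
def IsWeakClusterPoint {X : Type*} [NormedAddCommGroup X] [InnerProductSpace ℝ X]
    (x : ℕ → X) (w : X) : Prop :=
  ∃ φ : ℕ → ℕ, StrictMono φ ∧
    ∀ u : X, Tendsto (fun k => ⟪x (φ k), u⟫) atTop (nhds ⟪w, u⟫)

theorem fista_iterates_bounded_and_clusters_in_argmin
    {X : Type*} [NormedAddCommGroup X] [InnerProductSpace ℝ X] [CompleteSpace X]
    (β : ℝ) (hβ : 0 < β)
    (f : X → ℝ) (hf : ConvexOn ℝ Set.univ f)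
    (f' : X → X) (hf' : ∀ x, HasGradientAt f (f' x) x)
    (hlip : LipschitzWith (Real.toNNReal β) f')
    (g : X → EReal)
    (hgconv : ∀ x y : X, ∀ a b : ℝ, 0 ≤ a → 0 ≤ b → a + b = 1 →
      g (a • x + b • y) ≤ (a : EReal) * g x + (b : EReal) * g y)
    (hglsc : LowerSemicontinuous g)
    (hg_ne_bot : ∀ x, g x ≠ ⊥) (hg_proper : ∃ x, g x ≠ ⊤)
    (T : X → X)
    (hT : ∀ y u : X,
      g (T y) + (((β / 2) * ‖T y - (y - β⁻¹ • f' y)‖ ^ 2 : ℝ) : EReal)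
        ≤ g u + (((β / 2) * ‖u - (y - β⁻¹ • f' y)‖ ^ 2 : ℝ) : EReal))
    (F : X → EReal) (hF : ∀ x, F x = (f x : EReal) + g x)
    (t : ℕ → ℝ) (htpos : ∀ k, 0 < t k) (ht0 : t 0 = 1)
    (htlow : ∀ k : ℕ, ((k : ℝ) + 2) / 2 ≤ t k)
    (htrec : ∀ k : ℕ, (t (k + 1)) ^ 2 - t (k + 1) ≤ (t k) ^ 2)
    (x y : ℕ → X) (hy0 : y 0 = x 0)
    (hx : ∀ k : ℕ, x (k + 1) = T (y k))
    (hy : ∀ k : ℕ, y (k + 1) = x (k + 1) + ((t k - 1) / t (k + 1)) • (x (k + 1) - x k))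
    -- the minimizer set is nonempty, with minimal value μ
    (s : X) (hs : ∀ v : X, F s ≤ F v)
    (μ : ℝ) (hμ : (μ : EReal) = F s) :
    (∃ M : ℝ, ∀ k : ℕ, ‖x k‖ ≤ M) ∧
    (Tendsto (fun k : ℕ => F (x k)) atTop (nhds (μ : EReal)) →
      ∀ w : X, IsWeakClusterPoint x w → ∀ v : X, F w ≤ F v) := by
  obtain ⟨u₀, hu₀⟩ := hg_proper
  have ht1 : ∀ k, 1 ≤ t k := by
    intro k
    have := htlow k
    have hk : (0:ℝ) ≤ (k:ℝ) := Nat.cast_nonneg k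
    linarith
  -- Step A : g (T yy) is finite
  have hgT_ne_top : ∀ yy : X, g (T yy) ≠ ⊤ := by
    intro yy hcontra
    have h := hT yy u₀
    rw [hcontra, EReal.top_add_of_ne_bot (EReal.coe_ne_bot _)] at h
    exact absurd (top_le_iff.1 h) (EReal.add_lt_top hu₀ (EReal.coe_ne_top _)).ne
  -- Step B : strong prox inequality (real form)
  have hprox : ∀ (yy u : X), g u ≠ ⊤ →
      (g (T yy)).toReal + β/2 * ‖T yy - (yy - β⁻¹ • f' yy)‖^2 + β/2 * ‖u - T yy‖^2
        ≤ (g u).toReal + β/2 * ‖u - (yy - β⁻¹ • f' yy)‖^2 := by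
    intro yy u hu
    set p := yy - β⁻¹ • f' yy with hp
    set A := (g (T yy)).toReal with hA
    set B := (g u).toReal with hB
    have hgA : g (T yy) = (A : EReal) := (EReal.coe_toReal (hgT_ne_top yy) (hg_ne_bot _)).symm
    have hgB : g u = (B : EReal) := (EReal.coe_toReal hu (hg_ne_bot _)).symm
    have hstep : ∀ l : ℝ, 0 < l → l < 1 →
        A + β/2 * ‖T yy - p‖^2 + (1-l) * (β/2 * ‖u - T yy‖^2)
          ≤ B + β/2 * ‖u - p‖^2 := by
      intro l hl0 hl1
      have hxl := hT yy (l • u + (1-l) • T yy)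
      have hgxl := hgconv u (T yy) l (1-l) hl0.le (by linarith) (by ring)
      rw [hgA, hgB] at hgxl
      have hgxl' : g (l • u + (1-l) • T yy) ≤ ((l*B + (1-l)*A : ℝ) : EReal) := by
        rw [EReal.coe_add, EReal.coe_mul, EReal.coe_mul]
        exact hgxl
      have hnorm : ‖(l • u + (1-l) • T yy) - p‖^2
          = l * ‖u - p‖^2 + (1-l) * ‖T yy - p‖^2 - l*(1-l)*‖u - T yy‖^2 := by
        have hsplit : (l • u + (1-l) • T yy) - p = l • (u - p) + (1-l) • (T yy - p) := by
          module
        rw [hsplit, aux_normid l (1-l) hl0.le (by linarith) (by ring) (u-p) (T yy - p),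
          show (u - p) - (T yy - p) = u - T yy from by abel]
      have hchain : ((A + β/2 * ‖T yy - p‖^2 : ℝ) : EReal)
          ≤ ((l*B + (1-l)*A + β/2 * ‖(l • u + (1-l) • T yy) - p‖^2 : ℝ) : EReal) := by
        rw [EReal.coe_add, EReal.coe_add, ← hgA]
        exact le_trans (hxl) (add_le_add_left hgxl' _)
      have hreal := EReal.coe_le_coe_iff.1 hchain
      rw [hnorm] at hreal
      nlinarith [hreal, hl0, hl1]
    apply le_of_forall_pos_le_add
    intro ε hε
    set C₂ := β/2 * ‖u - T yy‖^2 with hC2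
    have hC2nn : 0 ≤ C₂ := by positivity
    set l := min (1/2 : ℝ) (ε / (C₂ + 1)) with hl
    have hl0 : 0 < l := lt_min (by norm_num) (by positivity)
    have hl1 : l < 1 := lt_of_le_of_lt (min_le_left _ _) (by norm_num)
    have hlC : l * C₂ ≤ ε := by
      have h1 : l ≤ ε / (C₂ + 1) := min_le_right _ _
      have h2 : l * C₂ ≤ (ε / (C₂ + 1)) * C₂ := mul_le_mul_of_nonneg_right h1 hC2nn
      have h3 : (ε / (C₂ + 1)) * C₂ ≤ ε := by
        rw [div_mul_eq_mul_div, div_le_iff₀ (by positivity)]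
        nlinarith
      linarith
    have := hstep l hl0 hl1
    linarith
  -- Step C : key inequality
  have hkey : ∀ (yy u : X),
      F (T yy) + ((β/2 * ‖u - T yy‖^2 : ℝ) : EReal)
        ≤ F u + ((β/2 * ‖u - yy‖^2 : ℝ) : EReal) := by
    intro yy u
    by_cases hu : g u = ⊤
    · have hFu : F u = ⊤ := by
        rw [hF, hu, add_comm]; exact EReal.top_add_of_ne_bot (EReal.coe_ne_bot _)
      rw [hFu, EReal.top_add_of_ne_bot (EReal.coe_ne_bot _)]
      exact le_top
    · set p := yy - β⁻¹ • f' yy with hp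
      set A := (g (T yy)).toReal with hA
      set B := (g u).toReal with hB
      have hgA : g (T yy) = (A : EReal) := (EReal.coe_toReal (hgT_ne_top yy) (hg_ne_bot _)).symm
      have hgB : g u = (B : EReal) := (EReal.coe_toReal hu (hg_ne_bot _)).symm
      have hFTy : F (T yy) = ((f (T yy) + A : ℝ) : EReal) := by
        rw [hF, hgA, EReal.coe_add]
      have hFu : F u = ((f u + B : ℝ) : EReal) := by rw [hF, hgB, EReal.coe_add]
      rw [hFTy, hFu, ← EReal.coe_add, ← EReal.coe_add, EReal.coe_le_coe_iff]
      have h1 := hprox yy u hu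
      rw [← hA, ← hB, ← hp] at h1
      have h2 : f (T yy) ≤ f yy + ⟪f' yy, T yy - yy⟫ + β/2 * ‖T yy - yy‖^2 := by
        have := aux_descent β hβ f f' hf' hlip yy (T yy - yy)
        rwa [add_sub_cancel] at this
      have h3 : f yy + ⟪f' yy, u - yy⟫ ≤ f u := aux_gradineq f hf f' hf' yy u
      have hexp : ∀ w : X, ‖w - p‖^2
          = ‖w - yy‖^2 + 2 * (β⁻¹ * ⟪w - yy, f' yy⟫) + ‖β⁻¹ • f' yy‖^2 := by
        intro w
        have hw : w - p = (w - yy) + β⁻¹ • f' yy := by rw [hp]; abel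
        rw [hw, @norm_add_sq_real, real_inner_smul_right]
      have hT1 := hexp (T yy)
      have hT2 := hexp u
      have hββ : β * β⁻¹ = 1 := mul_inv_cancel₀ hβ.ne'
      have e1 : β/2 * ‖T yy - p‖^2
          = β/2 * ‖T yy - yy‖^2 + ⟪T yy - yy, f' yy⟫ + β/2 * ‖β⁻¹ • f' yy‖^2 := by
        rw [hT1]; field_simp
      have e2 : β/2 * ‖u - p‖^2
          = β/2 * ‖u - yy‖^2 + ⟪u - yy, f' yy⟫ + β/2 * ‖β⁻¹ • f' yy‖^2 := by
        rw [hT2]; field_simp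
      have hc1 : ⟪f' yy, T yy - yy⟫ = ⟪T yy - yy, f' yy⟫ := real_inner_comm _ _
      have hc2 : ⟪f' yy, u - yy⟫ = ⟪u - yy, f' yy⟫ := real_inner_comm _ _
      linarith
  -- convexity of F (EReal)
  have hFconv : ∀ (p q : X) (a b : ℝ), 0 ≤ a → 0 ≤ b → a + b = 1 →
      F (a • p + b • q) ≤ (a : EReal) * F p + (b : EReal) * F q := by
    intro p q a b ha hb hab
    have hfp : ((f (a • p + b • q) : ℝ) : EReal) ≤ ((a * f p + b * f q : ℝ) : EReal) := by
      apply EReal.coe_le_coe_iff.2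
      have := hf.2 (Set.mem_univ p) (Set.mem_univ q) ha hb hab
      simpa [smul_eq_mul] using this
    have hgp := hgconv p q a b ha hb hab
    calc F (a • p + b • q) = (f (a • p + b • q) : EReal) + g (a • p + b • q) := hF _
      _ ≤ ((a * f p + b * f q : ℝ) : EReal) + ((a : EReal) * g p + (b : EReal) * g q) :=
          add_le_add hfp hgp
      _ = (a : EReal) * F p + (b : EReal) * F q := by
          rw [hF, hF, aux_ereal_mul_add a (f p) ha (g p) (hg_ne_bot p),
            aux_ereal_mul_add b (f q) hb (g q) (hg_ne_bot q),
            EReal.coe_add, EReal.coe_mul, EReal.coe_mul]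
          abel
  -- finiteness of F (x (k+1))
  set vR : ℕ → ℝ := fun k => (F (x k)).toReal with hvR
  have hFxreal : ∀ k : ℕ, F (x (k+1)) = ((vR (k+1) : ℝ) : EReal) := by
    intro k
    have hne_top : F (x (k+1)) ≠ ⊤ := by
      rw [hF, hx k]; exact (EReal.add_lt_top (EReal.coe_ne_top _) (hgT_ne_top _)).ne
    have hne_bot : F (x (k+1)) ≠ ⊥ := by
      rw [hF]
      simp [EReal.add_eq_bot_iff, EReal.coe_ne_bot, hg_ne_bot]
    exact (EReal.coe_toReal hne_top hne_bot).symm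
  have hμlevR : ∀ k : ℕ, μ ≤ vR (k+1) := by
    intro k
    have h := hs (x (k+1))
    rw [← hμ, hFxreal k] at h
    exact EReal.coe_le_coe_iff.1 h
  -- auxiliary sequence z
  set z : ℕ → X := fun k => t k • y k - (t k - 1) • x k with hz
  have hz0 : z 0 = x 0 := by simp [hz, ht0, hy0]
  have hzrec : ∀ k : ℕ, z (k+1) = t k • x (k+1) - (t k - 1) • x k := by
    intro k
    have hsc : t (k+1) * ((t k - 1) / t (k+1)) = t k - 1 := by
      rw [mul_comm, div_mul_eq_mul_div, mul_div_assoc, div_self (htpos (k+1)).ne', mul_one]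
    simp only [hz, hy k, smul_add, smul_smul, hsc]
    module
  -- step at k = 0
  have hstep0 : (t 0)^2 * (vR 1 - μ) + β/2 * ‖s - z 1‖^2 ≤ β/2 * ‖s - x 0‖^2 := by
    have h := hkey (y 0) s
    rw [← hx 0, hFxreal 0, ← hμ, ← EReal.coe_add, ← EReal.coe_add, EReal.coe_le_coe_iff] at h
    have hz1 : z 1 = x 1 := by rw [hzrec 0, ht0]; simp
    rw [hz1, ht0, hy0] at *
    rw [hz1]
    nlinarith [h]
  -- general step
  have hstep : ∀ k : ℕ, (t (k+1))^2 * (vR (k+2) - μ) + β/2 * ‖s - z (k+2)‖^2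
      ≤ ((t (k+1))^2 - t (k+1)) * (vR (k+1) - μ) + β/2 * ‖s - z (k+1)‖^2 := by
    intro k
    have htj := htpos (k+1)
    have htj1 : 1 ≤ t (k+1)
    · exact ht1 (k+1)
    have hb0 : (0:ℝ) < 1 / t (k+1) := by positivity
    have hble : 1 / t (k+1) ≤ 1 := by rw [div_le_one htj]; exact htj1
    have ha0 : (0:ℝ) ≤ 1 - 1 / t (k+1) := by linarith
    have hab : (1 - 1 / t (k+1)) + 1 / t (k+1) = 1 := by ring
    set u : X := (1 - 1 / t (k+1)) • x (k+1) + (1 / t (k+1)) • s with hudef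
    have hFu : F u ≤ (((1 - 1 / t (k+1)) * vR (k+1) + (1 / t (k+1)) * μ : ℝ) : EReal) := by
      have h := hFconv (x (k+1)) s (1 - 1 / t (k+1)) (1 / t (k+1)) ha0 hb0.le hab
      rw [hFxreal k, ← hμ] at h
      calc F u ≤ ((1 - 1 / t (k+1) : ℝ):EReal) * ((vR (k+1):ℝ):EReal)
            + ((1 / t (k+1) : ℝ):EReal) * ((μ:ℝ):EReal) := h
        _ = _ := by rw [← EReal.coe_mul, ← EReal.coe_mul, ← EReal.coe_add]
    have hk2 := hkey (y (k+1)) u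
    rw [← hx (k+1), hFxreal (k+1)] at hk2
    have h1 : (1 / t (k+1)) * t (k+1) = 1 := by field_simp
    have h2 : (1 / t (k+1)) * (t (k+1) - 1) = 1 - 1 / t (k+1) := by
      field_simp
    have hsz1 : u - y (k+1) = (1 / t (k+1)) • (s - z (k+1)) := by
      simp only [hudef, hz, smul_sub, smul_smul, h1, h2]
      module
    have hsz2 : u - x (k+2) = (1 / t (k+1)) • (s - z (k+2)) := by
      simp only [hudef, hzrec (k+1), smul_sub, smul_smul, h1, h2]
      module
    have hn1 : ‖u - y (k+1)‖^2 = (1 / t (k+1))^2 * ‖s - z (k+1)‖^2 := by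
      rw [hsz1, norm_smul, Real.norm_eq_abs, abs_of_pos hb0, mul_pow]
    have hn2 : ‖u - x (k+2)‖^2 = (1 / t (k+1))^2 * ‖s - z (k+2)‖^2 := by
      rw [hsz2, norm_smul, Real.norm_eq_abs, abs_of_pos hb0, mul_pow]
    rw [hn1, hn2] at hk2
    have hk3 : ((vR (k+2) + β/2 * ((1 / t (k+1))^2 * ‖s - z (k+2)‖^2) : ℝ):EReal)
        ≤ (((1 - 1 / t (k+1)) * vR (k+1) + (1 / t (k+1)) * μ
            + β/2 * ((1 / t (k+1))^2 * ‖s - z (k+1)‖^2) : ℝ):EReal) := by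
      rw [EReal.coe_add, EReal.coe_add]
      exact le_trans hk2 (add_le_add_left hFu _)
    have hreal := EReal.coe_le_coe_iff.1 hk3
    have hmul := mul_le_mul_of_nonneg_left hreal (sq_nonneg (t (k+1)))
    have e1 : (t (k+1))^2 * (vR (k+2) + β/2 * ((1 / t (k+1))^2 * ‖s - z (k+2)‖^2))
        = (t (k+1))^2 * vR (k+2) + β/2 * ‖s - z (k+2)‖^2 := by
      field_simp
    have e2 : (t (k+1))^2 * ((1 - 1 / t (k+1)) * vR (k+1) + (1 / t (k+1)) * μ
          + β/2 * ((1 / t (k+1))^2 * ‖s - z (k+1)‖^2))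
        = ((t (k+1))^2 - t (k+1)) * vR (k+1) + t (k+1) * μ + β/2 * ‖s - z (k+1)‖^2 := by
      field_simp
    rw [e1, e2] at hmul
    nlinarith [hmul]
  -- Lyapunov function
  set E : ℕ → ℝ := fun k => (t k)^2 * (vR (k+1) - μ) + β/2 * ‖s - z (k+1)‖^2 with hE
  have hEdec : ∀ k : ℕ, E (k+1) ≤ E k := by
    intro k
    have h1 := hstep k
    have h2 : ((t (k+1))^2 - t (k+1)) * (vR (k+1) - μ) ≤ (t k)^2 * (vR (k+1) - μ) :=
      mul_le_mul_of_nonneg_right (htrec k) (by linarith [hμlevR k])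
    simp only [hE]
    linarith
  have hEle : ∀ k : ℕ, E k ≤ β/2 * ‖s - x 0‖^2 := by
    intro k
    induction k with
    | zero => exact hstep0
    | succ n ih => exact le_trans (hEdec n) ih
  have hzb : ∀ k : ℕ, ‖s - z k‖ ≤ ‖s - x 0‖ := by
    intro k
    cases k with
    | zero => rw [hz0]
    | succ n =>
      have h2 := hEle n
      have h3 : 0 ≤ (t n)^2 * (vR (n+1) - μ) :=
        mul_nonneg (sq_nonneg _) (by linarith [hμlevR n])
      simp only [hE] at h2
      have h4 : ‖s - z (n+1)‖^2 ≤ ‖s - x 0‖^2 := by nlinarith [h2, h3, hβ]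
      nlinarith [h4, norm_nonneg (s - z (n+1)), norm_nonneg (s - x 0),
        sq_nonneg (‖s - z (n+1)‖ - ‖s - x 0‖)]
  have hxb : ∀ k : ℕ, ‖x k - s‖ ≤ ‖x 0 - s‖ := by
    intro k
    induction k with
    | zero => exact le_refl _
    | succ n ih =>
      have h1' : (1 / t n) * t n = 1 := by
        rw [one_div, inv_mul_cancel₀ (htpos n).ne']
      have h2' : (1 / t n) * (t n - 1) = 1 - 1 / t n := by
        rw [mul_sub, mul_one, one_div, inv_mul_cancel₀ (htpos n).ne']
      have hb0 : (0:ℝ) < 1 / t n := one_div_pos.2 (htpos n)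
      have hble : 1 / t n ≤ 1 := by rw [div_le_one (htpos n)]; exact ht1 n
      have hkey1 : x (n+1) - s = (1 / t n) • (z (n+1) - s) + (1 - 1 / t n) • (x n - s) := by
        simp only [hzrec n, smul_sub, smul_smul, h1', h2']
        module
      calc ‖x (n+1) - s‖ ≤ ‖(1 / t n) • (z (n+1) - s)‖ + ‖(1 - 1 / t n) • (x n - s)‖ := by
            rw [hkey1]; exact norm_add_le _ _
        _ = (1 / t n) * ‖z (n+1) - s‖ + (1 - 1 / t n) * ‖x n - s‖ := by
            rw [norm_smul, norm_smul, Real.norm_eq_abs, Real.norm_eq_abs,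
              abs_of_pos hb0, abs_of_nonneg (by linarith : (0:ℝ) ≤ 1 - 1 / t n)]
        _ ≤ (1 / t n) * ‖x 0 - s‖ + (1 - 1 / t n) * ‖x 0 - s‖ := by
            have hzz : ‖z (n+1) - s‖ ≤ ‖x 0 - s‖ := by
              rw [norm_sub_rev]
              calc ‖s - z (n+1)‖ ≤ ‖s - x 0‖ := hzb (n+1)
                _ = ‖x 0 - s‖ := norm_sub_rev _ _
            exact add_le_add (mul_le_mul_of_nonneg_left hzz hb0.le)
              (mul_le_mul_of_nonneg_left ih (by linarith))
        _ = ‖x 0 - s‖ := by ring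
  constructor
  · refine ⟨‖s‖ + ‖x 0 - s‖, fun k => ?_⟩
    calc ‖x k‖ = ‖(x k - s) + s‖ := by rw [sub_add_cancel]
      _ ≤ ‖x k - s‖ + ‖s‖ := norm_add_le _ _
      _ ≤ ‖s‖ + ‖x 0 - s‖ := by linarith [hxb k]
  · -- part 2
    intro htend w hw v
    obtain ⟨φ, hφmono, hφweak⟩ := hw
    have hwμ : F w ≤ (μ : EReal) := by
      by_contra hcon
      push_neg at hcon
      obtain ⟨c, hc1, hc2⟩ := EReal.exists_between_coe_real hcon
      set C : Set X := {p : X | F p ≤ (c : EReal)} with hC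
      have hCconv : Convex ℝ C := by
        intro p hp q hq a b ha hb hab
        show F (a•p + b•q) ≤ (c:EReal)
        calc F (a•p+b•q) ≤ (a:EReal)*F p + (b:EReal)*F q := hFconv p q a b ha hb hab
          _ ≤ (a:EReal)*(c:EReal) + (b:EReal)*(c:EReal) :=
              add_le_add (mul_le_mul_of_nonneg_left hp (by exact_mod_cast ha))
                (mul_le_mul_of_nonneg_left hq (by exact_mod_cast hb))
          _ = ((a*c + b*c : ℝ):EReal) := by rw [EReal.coe_add, EReal.coe_mul, EReal.coe_mul]
          _ = (c : EReal) := by rw [show a*c+b*c = c from by rw [← add_mul, hab, one_mul]]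
      have hFlsc : LowerSemicontinuous F := by
        have hdiff : Differentiable ℝ f := fun x0 => (hf' x0).differentiableAt
        have hfc : Continuous f := hdiff.continuous
        have hfl : LowerSemicontinuous (fun p : X => ((f p : ℝ) : EReal)) :=
          (continuous_coe_real_ereal.comp hfc).lowerSemicontinuous
        have hsum := hfl.add' hglsc (fun x0 =>
          EReal.continuousAt_add (Or.inl (EReal.coe_ne_top _)) (Or.inl (EReal.coe_ne_bot _)))
        have : F = fun p => ((f p : ℝ):EReal) + g p := funext hF
        rw [this]
        exact hsum
      have hCclosed : IsClosed C := hFlsc.isClosed_preimage (c : EReal)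
      have hwC : w ∈ C := by
        by_contra hwnot
        obtain ⟨ℓ, r, hr1, hr2⟩ := geometric_hahn_banach_point_closed hCconv hCclosed hwnot
        set uvec := (InnerProductSpace.toDual ℝ X).symm ℓ with huvec
        have hℓ : ∀ p : X, ℓ p = ⟪p, uvec⟫ := by
          intro p
          rw [real_inner_comm]
          exact (InnerProductSpace.toDual_symm_apply).symm
        have htend2 : Tendsto (fun k => F (x (φ k))) atTop (nhds (μ:EReal)) :=
          htend.comp (hφmono.tendsto_atTop)
        have hev : ∀ᶠ k in atTop, F (x (φ k)) < (c:EReal) :=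
          htend2.eventually_lt_const hc1
        have hevC : ∀ᶠ k in atTop, r ≤ ⟪x (φ k), uvec⟫ := by
          filter_upwards [hev] with k hk
          have : x (φ k) ∈ C := le_of_lt hk
          have := hr2 _ this
          rw [hℓ] at this
          exact this.le
        have hlim : Tendsto (fun k => ⟪x (φ k), uvec⟫) atTop (nhds ⟪w, uvec⟫) := hφweak uvec
        have hge : r ≤ ⟪w, uvec⟫ := ge_of_tendsto hlim hevC
        rw [hℓ w] at hr1
        linarith
      exact absurd (lt_of_le_of_lt hwC hc2) (lt_irrefl _)
    exact le_trans hwμ (hμ ▸ hs v)
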